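/- For every ε > 0 and every rational a/b ∈ (0,1), there exist an integer k (a multiple of b) and a real number α ∈ (a/b - ε, a/b + ε) ∩ (0,1) such that α is a root of the polynomial b_E(y) = k·P(B_{k,y} ∈ E_{a,b}) - ky, where E_{a,b} = {i ≤ k : i mod b ∈ {0,...,a-1}}. -/

import Mathlib

open Complex Finset Filter

lemma orth (b : ℕ) (hb : 0 < b) (m : ℤ) :
    ∑ j ∈ Finset.range b, Complex.exp (2 * Real.pi * I / b) ^ ((j:ℤ) * m)
      = if (b:ℤ) ∣ m then (b:ℂ) else 0 := by
  set ζ := Complex.exp (2 * Real.pi * I / b) with hζ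
  have hprim : IsPrimitiveRoot ζ b := Complex.isPrimitiveRoot_exp b hb.ne'
  have hzb : ζ ^ (b:ℤ) = 1 := by exact_mod_cast hprim.pow_eq_one
  set w : ℂ := ζ ^ m with hw
  have hstep : ∀ j : ℕ, ζ ^ ((j:ℤ) * m) = w ^ j := by
    intro j
    rw [hw, ← zpow_natCast (ζ ^ m) j, ← zpow_mul, mul_comm]
  simp only [hstep]
  by_cases hd : (b:ℤ) ∣ m
  · have hw1 : w = 1 := (hprim.zpow_eq_one_iff_dvd m).mpr hd
    simp [hw1, hd]
  · have hw1 : w ≠ 1 := fun h => hd ((hprim.zpow_eq_one_iff_dvd m).mp h)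
    have hwb : w ^ b = 1 := by
      rw [hw, ← zpow_natCast, ← zpow_mul, mul_comm, zpow_mul, hzb, one_zpow]
    rw [geom_sum_eq hw1, hwb]
    simp [hd]

lemma abs_lt_one_of (y : ℝ) (hy0 : 0 < y) (hy1 : y < 1) (u : ℂ)
    (hu : ‖u‖ = 1) (hu1 : u ≠ 1) :
    ‖(1 - (y:ℂ)) + y * u‖ < 1 := by
  have hns : Complex.normSq u = 1 := by
    have := Complex.sq_norm u; rw [hu] at this; linarith [this.symm]
  have hre : u.re < 1 := by
    rcases lt_or_eq_of_le (Complex.re_le_norm u) with h | h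
    · rwa [hu] at h
    · exfalso
      have him : u.im = 0 := by
        have : u.re ^ 2 + u.im ^ 2 = 1 := by
          rw [← hns]; simp [Complex.normSq_apply]; ring
        nlinarith [this, h, hu]
      exact hu1 (Complex.ext (by rw [h, hu]; rfl) (by simp [him]))
  have key : ‖(1 - (y:ℂ)) + y * u‖ ^ 2 < 1 := by
    rw [Complex.sq_norm]
    have h1 : Complex.normSq ((1 - (y:ℂ)) + y * u)
        = (1 - y + y * u.re)^2 + (y * u.im)^2 := by
      simp [Complex.normSq_apply, Complex.add_re, Complex.add_im]; ring
    rw [h1]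
    have h2 : u.re ^ 2 + u.im ^ 2 = 1 := by
      rw [← hns]; simp [Complex.normSq_apply]; ring
    have heq : (1 - y + y * u.re)^2 + (y * u.im)^2 = 1 - 2*y*(1-y)*(1-u.re) := by
      linear_combination (y^2) * h2
    have hpos : 0 < 2*y*(1-y)*(1-u.re) := by
      apply mul_pos (by nlinarith) (by linarith)
    linarith
  have h0 : (0:ℝ) ≤ ‖(1 - (y:ℂ)) + y * u‖ := norm_nonneg _
  nlinarith [key, h0]

lemma key_identity (a b : ℕ) (ha : 0 < a) (hab : a < b) (y : ℝ) (k : ℕ) :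
    (b:ℂ) * ((∑ i ∈ (Finset.range (k+1)).filter (fun i => i % b < a),
        (k.choose i : ℝ) * y^i * (1-y)^(k-i) : ℝ) : ℂ)
      = ∑ j ∈ Finset.range b,
          (∑ r ∈ Finset.range a, Complex.exp (2 * Real.pi * I / b) ^ (-((j:ℤ)*(r:ℤ))))
            * ((1 - (y:ℂ)) + y * Complex.exp (2 * Real.pi * I / b) ^ j) ^ k := by
  have hb : 0 < b := ha.trans hab
  set ζ := Complex.exp (2 * Real.pi * I / b) with hζ
  have hζ0 : ζ ≠ 0 := Complex.exp_ne_zero _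
  have hdvd : ∀ (i r : ℕ), r < b → ((b:ℤ) ∣ (i:ℤ) - (r:ℤ) ↔ i % b = r) := by
    intro i r hr
    rw [Int.dvd_iff_emod_eq_zero, ← Int.emod_eq_emod_iff_emod_sub_eq_zero,
      ← Int.natCast_mod, ← Int.natCast_mod, Nat.mod_eq_of_lt hr, Nat.cast_inj]
  have hpow : ∀ (j i r : ℕ), ζ ^ ((j:ℤ) * ((i:ℤ) - (r:ℤ)))
      = (ζ ^ j) ^ i * ζ ^ (-((j:ℤ)*(r:ℤ))) := by
    intro j i r
    rw [mul_sub, sub_eq_add_neg, zpow_add₀ hζ0]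
    congr 1
    rw [show (j:ℤ) * (i:ℤ) = ((j*i : ℕ) : ℤ) by push_cast; ring, zpow_natCast, pow_mul]
  symm
  calc ∑ j ∈ Finset.range b,
          (∑ r ∈ Finset.range a, ζ ^ (-((j:ℤ)*(r:ℤ)))) * ((1 - (y:ℂ)) + y * ζ ^ j) ^ k
      = ∑ j ∈ Finset.range b, ∑ r ∈ Finset.range a, ∑ i ∈ Finset.range (k+1),
          ((k.choose i : ℂ) * y^i * (1-(y:ℂ))^(k-i)) * ζ ^ ((j:ℤ) * ((i:ℤ) - (r:ℤ))) := by
        refine Finset.sum_congr rfl fun j _ => ?_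
        rw [Finset.sum_mul]
        refine Finset.sum_congr rfl fun r _ => ?_
        rw [show ((1 - (y:ℂ)) + y * ζ ^ j) ^ k = ((y:ℂ) * ζ ^ j + (1 - y)) ^ k by ring_nf,
          add_pow, Finset.mul_sum]
        refine Finset.sum_congr rfl fun i _ => ?_
        rw [hpow j i r, mul_pow]
        ring
    _ = ∑ r ∈ Finset.range a, ∑ j ∈ Finset.range b, ∑ i ∈ Finset.range (k+1),
          ((k.choose i : ℂ) * y^i * (1-(y:ℂ))^(k-i)) * ζ ^ ((j:ℤ) * ((i:ℤ) - (r:ℤ))) :=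
        Finset.sum_comm
    _ = ∑ r ∈ Finset.range a, ∑ i ∈ Finset.range (k+1), ∑ j ∈ Finset.range b,
          ((k.choose i : ℂ) * y^i * (1-(y:ℂ))^(k-i)) * ζ ^ ((j:ℤ) * ((i:ℤ) - (r:ℤ))) :=
        Finset.sum_congr rfl fun r _ => Finset.sum_comm
    _ = ∑ i ∈ Finset.range (k+1), ∑ r ∈ Finset.range a, ∑ j ∈ Finset.range b,
          ((k.choose i : ℂ) * y^i * (1-(y:ℂ))^(k-i)) * ζ ^ ((j:ℤ) * ((i:ℤ) - (r:ℤ))) :=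
        Finset.sum_comm
    _ = ∑ i ∈ Finset.range (k+1),
          ((k.choose i : ℂ) * y^i * (1-(y:ℂ))^(k-i)) *
            (∑ r ∈ Finset.range a, if (b:ℤ) ∣ (i:ℤ) - (r:ℤ) then (b:ℂ) else 0) := by
        refine Finset.sum_congr rfl fun i _ => ?_
        rw [Finset.mul_sum]
        refine Finset.sum_congr rfl fun r _ => ?_
        rw [← Finset.mul_sum, orth b hb ((i:ℤ) - (r:ℤ))]
    _ = ∑ i ∈ Finset.range (k+1),
          (if i % b < a then (b:ℂ) else 0) * ((k.choose i : ℂ) * y^i * (1-(y:ℂ))^(k-i)) := by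
        refine Finset.sum_congr rfl fun i _ => ?_
        rw [mul_comm]
        congr 1
        calc (∑ r ∈ Finset.range a, if (b:ℤ) ∣ (i:ℤ) - (r:ℤ) then (b:ℂ) else 0)
            = ∑ r ∈ Finset.range a, if i % b = r then (b:ℂ) else 0 := by
              refine Finset.sum_congr rfl fun r hr => ?_
              exact if_congr (hdvd i r ((Finset.mem_range.mp hr).trans hab)) rfl rfl
          _ = if i % b < a then (b:ℂ) else 0 := by
              rw [Finset.sum_ite_eq]
              exact if_congr Finset.mem_range rfl rfl
    _ = (b:ℂ) * ((∑ i ∈ (Finset.range (k+1)).filter (fun i => i % b < a),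
        (k.choose i : ℝ) * y^i * (1-y)^(k-i) : ℝ) : ℂ) := by
        push_cast
        rw [Finset.sum_filter, Finset.mul_sum]
        refine Finset.sum_congr rfl fun i _ => ?_
        split
        · ring
        · simp

lemma key_tendsto (a b : ℕ) (ha : 0 < a) (hab : a < b) (y : ℝ) (hy0 : 0 < y) (hy1 : y < 1) :
    Filter.Tendsto (fun k : ℕ => ∑ i ∈ (Finset.range (k+1)).filter (fun i => i % b < a),
      (k.choose i : ℝ) * y^i * (1-y)^(k-i)) Filter.atTop (nhds ((a:ℝ)/b)) := by
  have hb : 0 < b := ha.trans hab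
  set ζ := Complex.exp (2 * Real.pi * I / b) with hζ
  have hζ0 : ζ ≠ 0 := Complex.exp_ne_zero _
  have hprim : IsPrimitiveRoot ζ b := Complex.isPrimitiveRoot_exp b hb.ne'
  set F : ℕ → ℝ := fun k => ∑ i ∈ (Finset.range (k+1)).filter (fun i => i % b < a),
      (k.choose i : ℝ) * y^i * (1-y)^(k-i) with hF
  have habs1 : ‖ζ‖ = 1 := by
    rw [hζ, show 2 * (Real.pi:ℂ) * I / b = ((2 * Real.pi / b : ℝ) : ℂ) * I by push_cast; ring]
    exact Complex.norm_exp_ofReal_mul_I _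
  have hζjabs : ∀ j : ℕ, ‖ζ ^ j‖ = 1 := by
    intro j; rw [norm_pow, habs1, one_pow]
  set ρ : ℕ → ℝ := fun j => ‖(1 - (y:ℂ)) + y * ζ ^ j‖ with hρdef
  have hρ : ∀ j ∈ (Finset.range b).erase 0, ρ j < 1 := by
    intro j hj
    obtain ⟨hj0, hjb⟩ := Finset.mem_erase.mp hj
    exact abs_lt_one_of y hy0 hy1 (ζ ^ j) (hζjabs j)
      (hprim.pow_ne_one_of_pos_of_lt hj0 (Finset.mem_range.mp hjb))
  have hsplit : ∀ k : ℕ, (b:ℂ) * (F k : ℂ) - a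
      = ∑ j ∈ (Finset.range b).erase 0,
          (∑ r ∈ Finset.range a, ζ ^ (-((j:ℤ)*(r:ℤ)))) * ((1 - (y:ℂ)) + y * ζ ^ j) ^ k := by
    intro k
    rw [hF, key_identity a b ha hab y k,
      ← Finset.add_sum_erase _ _ (Finset.mem_range.mpr hb)]
    have h0 : (∑ r ∈ Finset.range a, ζ ^ (-(((0:ℕ):ℤ)*(r:ℤ))))
        * ((1 - (y:ℂ)) + y * ζ ^ (0:ℕ)) ^ k = a := by
      simp
    rw [h0]; ring
  have hwbound : ∀ j : ℕ, ‖∑ r ∈ Finset.range a, ζ ^ (-((j:ℤ)*(r:ℤ)))‖ ≤ a := by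
    intro j
    calc ‖∑ r ∈ Finset.range a, ζ ^ (-((j:ℤ)*(r:ℤ)))‖
        ≤ ∑ r ∈ Finset.range a, ‖ζ ^ (-((j:ℤ)*(r:ℤ)))‖ :=
          norm_sum_le _ _
      _ = ∑ r ∈ Finset.range a, 1 := by
          refine Finset.sum_congr rfl fun r _ => ?_
          rw [norm_zpow, habs1, one_zpow]
      _ = a := by simp
  have hbound : ∀ k : ℕ, |F k - (a:ℝ)/b|
      ≤ (∑ j ∈ (Finset.range b).erase 0, (a:ℝ) * ρ j ^ k) / b := by
    intro k
    have h1 : ‖(b:ℂ) * (F k : ℂ) - a‖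
        ≤ ∑ j ∈ (Finset.range b).erase 0, (a:ℝ) * ρ j ^ k := by
      rw [hsplit k]
      refine (norm_sum_le _ _).trans ?_
      refine Finset.sum_le_sum fun j _ => ?_
      rw [norm_mul, norm_pow]
      exact mul_le_mul (hwbound j) le_rfl (by positivity) (by positivity)
    have h2 : ‖(b:ℂ) * (F k : ℂ) - a‖ = b * |F k - (a:ℝ)/b| := by
      rw [show (b:ℂ) * (F k : ℂ) - a = (((b:ℝ) * F k - a : ℝ) : ℂ) by push_cast; ring,
        Complex.norm_real, Real.norm_eq_abs,
        show (b:ℝ) * F k - a = b * (F k - (a:ℝ)/b) by field_simp; try ring,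
        abs_mul, Nat.abs_cast]
    rw [le_div_iff₀ (by positivity : (0:ℝ) < (b:ℝ))]
    rw [h2] at h1
    linarith
  have htend : Filter.Tendsto
      (fun k : ℕ => (∑ j ∈ (Finset.range b).erase 0, (a:ℝ) * ρ j ^ k) / b)
      Filter.atTop (nhds 0) := by
    have h0 : Filter.Tendsto
        (fun k : ℕ => ∑ j ∈ (Finset.range b).erase 0, (a:ℝ) * ρ j ^ k)
        Filter.atTop (nhds 0) := by
      have := tendsto_finset_sum ((Finset.range b).erase 0)
        (fun j _hj => (tendsto_pow_atTop_nhds_zero_of_lt_one (norm_nonneg _)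
          (hρ j _hj)).const_mul (a:ℝ))
      simpa using this
    simpa using h0.div_const (b:ℝ)
  rw [tendsto_iff_dist_tendsto_zero]
  exact squeeze_zero (fun k => dist_nonneg)
    (fun k => by rw [Real.dist_eq]; exact hbound k) htend

theorem stmt_16 (ε : ℝ) (hε : 0 < ε) (a b : ℕ) (ha : 0 < a) (hab : a < b) :
    ∃ k : ℕ, 0 < k ∧ b ∣ k ∧
      ∃ α : ℝ, α ∈ Set.Ioo (0:ℝ) 1 ∧ α ∈ Set.Ioo ((a:ℝ)/b - ε) ((a:ℝ)/b + ε) ∧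
        (k:ℝ) * (∑ i ∈ (Finset.range (k+1)).filter (fun i => i % b < a),
            (k.choose i : ℝ) * α^i * (1-α)^(k-i)) - k*α = 0 := by
  have hb : 0 < b := ha.trans hab
  have hbr : (0:ℝ) < b := by exact_mod_cast hb
  have hq0 : 0 < (a:ℝ)/b := by positivity
  have hq1 : (a:ℝ)/b < 1 := by
    rw [div_lt_one hbr]; exact_mod_cast hab
  set δ : ℝ := min ε (min ((a:ℝ)/b) (1 - (a:ℝ)/b)) / 2 with hδdef
  have hδ0 : 0 < δ := by
    apply div_pos _ two_pos
    exact lt_min hε (lt_min hq0 (by linarith))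
  have hm1 : min ε (min ((a:ℝ)/b) (1 - (a:ℝ)/b)) ≤ ε := min_le_left _ _
  have hm2 : min ε (min ((a:ℝ)/b) (1 - (a:ℝ)/b)) ≤ (a:ℝ)/b :=
    (min_le_right _ _).trans (min_le_left _ _)
  have hm3 : min ε (min ((a:ℝ)/b) (1 - (a:ℝ)/b)) ≤ 1 - (a:ℝ)/b :=
    (min_le_right _ _).trans (min_le_right _ _)
  have hδε : δ < ε := by rw [hδdef]; linarith
  have hδa : δ < (a:ℝ)/b := by rw [hδdef]; linarith
  have hδb : δ < 1 - (a:ℝ)/b := by rw [hδdef]; linarith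
  set y₁ : ℝ := (a:ℝ)/b - δ with hy1def
  set y₂ : ℝ := (a:ℝ)/b + δ with hy2def
  have hy₁0 : 0 < y₁ := by simp only [hy1def]; linarith
  have hy₁1 : y₁ < 1 := by simp only [hy1def]; linarith
  have hy₂0 : 0 < y₂ := by simp only [hy2def]; linarith
  have hy₂1 : y₂ < 1 := by simp only [hy2def]; linarith
  have ht1 := key_tendsto a b ha hab y₁ hy₁0 hy₁1
  have ht2 := key_tendsto a b ha hab y₂ hy₂0 hy₂1
  have he1 : ∀ᶠ k : ℕ in Filter.atTop,
      (a:ℝ)/b - δ/2 < ∑ i ∈ (Finset.range (k+1)).filter (fun i => i % b < a),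
        (k.choose i : ℝ) * y₁^i * (1-y₁)^(k-i) :=
    ht1.eventually (eventually_gt_nhds (by linarith))
  have he2 : ∀ᶠ k : ℕ in Filter.atTop,
      (∑ i ∈ (Finset.range (k+1)).filter (fun i => i % b < a),
        (k.choose i : ℝ) * y₂^i * (1-y₂)^(k-i)) < (a:ℝ)/b + δ/2 :=
    ht2.eventually (eventually_lt_nhds (by linarith))
  obtain ⟨K, hK⟩ := Filter.eventually_atTop.mp (he1.and he2)
  set k : ℕ := b * (K + 1) with hkdef
  have hkK : K ≤ k := by
    calc K ≤ K + 1 := Nat.le_succ K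
      _ ≤ b * (K + 1) := Nat.le_mul_of_pos_left _ hb
  obtain ⟨hF1, hF2⟩ := hK k hkK
  set g : ℝ → ℝ := fun x => (∑ i ∈ (Finset.range (k+1)).filter (fun i => i % b < a),
      (k.choose i : ℝ) * x^i * (1-x)^(k-i)) - x with hgdef
  have hgc : Continuous g := by
    apply Continuous.sub _ continuous_id
    apply continuous_finset_sum
    intro i _
    fun_prop
  have hy12 : y₁ ≤ y₂ := by simp only [hy1def, hy2def]; linarith
  have hg1 : 0 < g y₁ := by
    simp only [hgdef]
    have : (a:ℝ)/b - δ/2 < ∑ i ∈ (Finset.range (k+1)).filter (fun i => i % b < a),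
        (k.choose i : ℝ) * y₁^i * (1-y₁)^(k-i) := hF1
    simp only [hy1def] at this ⊢
    linarith
  have hg2 : g y₂ < 0 := by
    simp only [hgdef]
    have : (∑ i ∈ (Finset.range (k+1)).filter (fun i => i % b < a),
        (k.choose i : ℝ) * y₂^i * (1-y₂)^(k-i)) < (a:ℝ)/b + δ/2 := hF2
    simp only [hy2def] at this ⊢
    linarith
  have hiv := intermediate_value_Ioo' hy12 hgc.continuousOn
  have h0mem : (0:ℝ) ∈ Set.Ioo (g y₂) (g y₁) := ⟨hg2, hg1⟩
  obtain ⟨α, hαmem, hgα⟩ := hiv h0mem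
  rw [Set.mem_Ioo] at hαmem
  obtain ⟨hα1, hα2⟩ := hαmem
  have hα1' : (a:ℝ)/b - δ < α := by rw [hy1def] at hα1; exact hα1
  have hα2' : α < (a:ℝ)/b + δ := by rw [hy2def] at hα2; exact hα2
  refine ⟨k, ?_, ⟨K + 1, rfl⟩, α, ?_, ?_, ?_⟩
  · exact Nat.mul_pos hb (Nat.succ_pos K)
  · exact ⟨lt_trans hy₁0 hα1, lt_trans hα2 hy₂1⟩
  · exact ⟨by linarith, by linarith⟩
  · have : (∑ i ∈ (Finset.range (k+1)).filter (fun i => i % b < a),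
        (k.choose i : ℝ) * α^i * (1-α)^(k-i)) = α := by
      have := hgα
      simp only [hgdef] at this
      linarith
    rw [this]
    ring
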